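/- Let (Ω, F, P) be a probability space. For each j ∈ ℕ let G_j ⊆ F be a sub-σ-algebra, A_j ∈ G_j and B_j ∈ F events, and let c ∈ ℝ be a constant. Suppose the conditional expectations E[1_{B_j} | G_j] converge to c in probability as j → ∞ (for every ε > 0, P(|E[1_{B_j} | G_j] − c| > ε) → 0). Then P(A_j ∩ B_j) − P(A_j)·P(B_j) → 0 as j → ∞. -/

import Mathlib

open MeasureTheory Filter

/-- If `F j → 0` in probability and the `F j` are uniformly a.e. bounded, then
`∫ |F j| → 0`. -/
lemma aux_L1_stmt16 {Ω : Type*} [MeasurableSpace Ω] (P : Measure Ω) [IsProbabilityMeasure P]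
    (F : ℕ → Ω → ℝ) (hint : ∀ j, Integrable (F j) P) (M : ℝ)
    (hbd : ∀ j, ∀ᵐ ω ∂P, |F j ω| ≤ M)
    (hconv : ∀ ε > (0 : ℝ), Tendsto (fun j => P {ω | ε < |F j ω|}) atTop (nhds 0)) :
    Tendsto (fun j => ∫ ω, |F j ω| ∂P) atTop (nhds 0) := by
  rw [Metric.tendsto_atTop]
  intro ε hε
  set M' := max M 0 with hM'
  have hM'0 : 0 ≤ M' := le_max_right _ _
  have key : Tendsto (fun j => M' * (P {ω | ε / 2 < |F j ω|}).toReal) atTop (nhds 0) := by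
    have h1 : Tendsto (fun j => (P {ω | ε / 2 < |F j ω|}).toReal) atTop (nhds 0) := by
      have := (ENNReal.tendsto_toReal (by simp)).comp (hconv (ε / 2) (half_pos hε))
      exact this
    simpa using tendsto_const_nhds.mul h1
  have hev : ∀ᶠ j in atTop, M' * (P {ω | ε / 2 < |F j ω|}).toReal < ε / 2 :=
    key.eventually_lt_const (half_pos hε)
  rw [eventually_atTop] at hev
  obtain ⟨N, hN⟩ := hev
  refine ⟨N, fun j hj => ?_⟩
  have sm := (hint j).aestronglyMeasurable
  set F' := sm.mk (F j) with hF'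
  have hFF' : F j =ᵐ[P] F' := sm.ae_eq_mk
  have hmeas : Measurable F' := sm.stronglyMeasurable_mk.measurable
  have hSmeas : MeasurableSet {ω | ε / 2 < |F' ω|} :=
    measurableSet_lt measurable_const hmeas.abs
  have hPset : P {ω | ε / 2 < |F j ω|} = P {ω | ε / 2 < |F' ω|} := by
    apply measure_congr
    rw [Filter.eventuallyEq_set]
    filter_upwards [hFF'] with ω h
    simp [Set.mem_setOf_eq, h]
  have hbd' : ∀ᵐ ω ∂P, |F' ω| ≤ M' := by
    filter_upwards [hbd j, hFF'] with ω h1 h2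
    rw [← h2]
    exact h1.trans (le_max_left _ _)
  have hib : Integrable (fun ω => ε / 2 + {ω | ε / 2 < |F' ω|}.indicator (fun _ => M') ω) P :=
    (integrable_const _).add ((integrable_const M').indicator hSmeas)
  have hle : ∫ ω, |F j ω| ∂P ≤ ε / 2 + M' * (P {ω | ε / 2 < |F j ω|}).toReal := by
    have h1 : ∫ ω, |F j ω| ∂P = ∫ ω, |F' ω| ∂P :=
      integral_congr_ae (hFF'.mono fun ω h => by simp only [h])
    rw [h1, hPset]
    have h2 : ∫ ω, |F' ω| ∂P
        ≤ ∫ ω, (ε / 2 + {ω | ε / 2 < |F' ω|}.indicator (fun _ => M') ω) ∂P := by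
      apply integral_mono_ae ((hint j).congr hFF').abs hib
      filter_upwards [hbd'] with ω h
      by_cases hmem : ω ∈ {ω | ε / 2 < |F' ω|}
      · rw [Set.indicator_of_mem hmem]
        linarith [half_pos hε]
      · rw [Set.indicator_of_notMem hmem]
        have : ¬ (ε / 2 < |F' ω|) := hmem
        linarith [le_of_not_gt this]
    have h3 : ∫ ω, (ε / 2 + {ω | ε / 2 < |F' ω|}.indicator (fun _ => M') ω) ∂P
        = ε / 2 + M' * (P {ω | ε / 2 < |F' ω|}).toReal := by
      rw [integral_add (integrable_const _) ((integrable_const M').indicator hSmeas),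
        integral_const, integral_indicator_const _ hSmeas]
      simp [mul_comm, Measure.real]
    linarith
  have hnn : 0 ≤ ∫ ω, |F j ω| ∂P := integral_nonneg fun ω => abs_nonneg _
  rw [Real.dist_eq, sub_zero, abs_of_nonneg hnn]
  linarith [hN j hj]

/-- Core of Proposition 7 (asymptotic independence): if `A_j` is `G_j`-measurable
and the conditional probabilities `E[1_{B_j} | G_j]` converge in probability to a
constant `c`, then `P(A_j ∩ B_j) − P(A_j) P(B_j) → 0`. -/
theorem stmt_16 {Ω : Type*} [m0 : MeasurableSpace Ω] (P : Measure Ω)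
    [IsProbabilityMeasure P]
    (G : ℕ → MeasurableSpace Ω) (hG : ∀ j, G j ≤ m0)
    (A B : ℕ → Set Ω)
    (hA : ∀ j, MeasurableSet[G j] (A j)) (hB : ∀ j, MeasurableSet (B j))
    (c : ℝ)
    (hconv : ∀ ε > (0 : ℝ), Tendsto
      (fun j => P {ω | ε < |(P[(B j).indicator (fun _ => (1 : ℝ)) | G j]) ω - c|})
      atTop (nhds 0)) :
    Tendsto (fun j => (P (A j ∩ B j)).toReal - (P (A j)).toReal * (P (B j)).toReal)
      atTop (nhds 0) := by
  have hgint : ∀ j, Integrable ((B j).indicator (fun _ => (1 : ℝ))) P :=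
    fun j => (integrable_const 1).indicator (hB j)
  set f : ℕ → Ω → ℝ := fun j => P[(B j).indicator (fun _ => (1 : ℝ)) | G j] with hf
  have hfint : ∀ j, Integrable (f j) P := fun j => integrable_condExp
  have hbd : ∀ j, ∀ᵐ ω ∂P, |f j ω - c| ≤ 1 + |c| := by
    intro j
    have h0 : 0 ≤ᵐ[P] f j :=
      condExp_nonneg (Filter.Eventually.of_forall fun ω =>
        Set.indicator_nonneg (fun _ _ => zero_le_one) ω)
    have h1 : f j ≤ᵐ[P] fun _ => (1 : ℝ) := by
      have h := condExp_mono (μ := P) (m := G j) (hgint j) (integrable_const (1 : ℝ))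
        (Filter.Eventually.of_forall fun ω =>
          Set.indicator_le_self' (fun _ _ => zero_le_one) ω)
      rwa [condExp_const (hG j)] at h
    filter_upwards [h0, h1] with ω h0 h1
    simp only [Pi.zero_apply] at h0
    have h2 : |f j ω - c| ≤ |f j ω| + |c| := by
      have := abs_add_le (f j ω) (-c)
      simpa [sub_eq_add_neg] using this
    have h3 : |f j ω| ≤ 1 := abs_le.2 ⟨by linarith, h1⟩
    linarith
  have eqA : ∀ j, ∫ ω in A j, f j ω ∂P = (P (A j ∩ B j)).toReal := by
    intro j
    rw [hf]
    rw [setIntegral_condExp (hG j) (hgint j) (hA j), setIntegral_indicator (hB j)]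
    simp [Measure.real]
  have eqB : ∀ j, ∫ ω, f j ω ∂P = (P (B j)).toReal := by
    intro j
    rw [hf, integral_condExp (hG j), integral_indicator_const _ (hB j)]
    simp [Measure.real]
  have keyexpr : ∀ j, (P (A j ∩ B j)).toReal - (P (A j)).toReal * (P (B j)).toReal
      = (∫ ω in A j, (f j ω - c) ∂P) - (P (A j)).toReal * ∫ ω, (f j ω - c) ∂P := by
    intro j
    rw [integral_sub ((hfint j).restrict) (integrable_const c),
      integral_sub (hfint j) (integrable_const c),
      eqA j, eqB j, setIntegral_const, integral_const]
    simp only [measure_univ, Measure.real, ENNReal.toReal_one, smul_eq_mul, one_mul]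
    ring
  refine squeeze_zero_norm (a := fun j => 2 * ∫ ω, |f j ω - c| ∂P) (fun j => ?_) ?_
  ·
    rw [keyexpr j]
    have hint' : Integrable (fun ω => |f j ω - c|) P :=
      ((hfint j).sub (integrable_const c)).abs
    have h1 : ‖∫ ω in A j, (f j ω - c) ∂P‖ ≤ ∫ ω, |f j ω - c| ∂P := by
      refine (norm_integral_le_integral_norm _).trans ?_
      simpa [Real.norm_eq_abs] using
        setIntegral_le_integral hint' (Filter.Eventually.of_forall fun ω => abs_nonneg _)
    have h2 : ‖∫ ω, (f j ω - c) ∂P‖ ≤ ∫ ω, |f j ω - c| ∂P := by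
      refine (norm_integral_le_integral_norm _).trans ?_
      simp [Real.norm_eq_abs]
    have hA1 : (P (A j)).toReal ≤ 1 := by
      have h := ENNReal.toReal_mono (by simp) (prob_le_one (μ := P) (s := A j))
      simpa using h
    have h3 : ‖(P (A j)).toReal * ∫ ω, (f j ω - c) ∂P‖
        = (P (A j)).toReal * ‖∫ ω, (f j ω - c) ∂P‖ := by
      rw [norm_mul, Real.norm_of_nonneg ENNReal.toReal_nonneg]
    have h4 := norm_sub_le (∫ ω in A j, (f j ω - c) ∂P)
      ((P (A j)).toReal * ∫ ω, (f j ω - c) ∂P)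
    have h5 : (P (A j)).toReal * ‖∫ ω, (f j ω - c) ∂P‖ ≤ 1 * ∫ ω, |f j ω - c| ∂P :=
      mul_le_mul hA1 h2 (norm_nonneg _) zero_le_one
    rw [h3] at h4
    show _ ≤ 2 * ∫ ω, |f j ω - c| ∂P
    linarith
  · have haux := aux_L1_stmt16 P (fun j ω => f j ω - c)
      (fun j => (hfint j).sub (integrable_const c)) (1 + |c|) hbd hconv
    simpa using tendsto_const_nhds.mul haux
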